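/- In a k-player alternating move game, the 'Folk Theorem' profile is a Nash equilibrium: let ν_i be the zero-sum value for player i (against the coalition of all others), σ_i an optimal strategy for player i in that zero-sum game, and σ̄_i an optimal coalition punishment strategy holding player i to at most ν_i. The profile where each player i plays σ_i, and upon the first deviation by some player j switches permanently to σ̄_j, is a Nash equilibrium in which each player i receives utility at least ν_i. -/

import Mathlib

open Filter Finset
open Topology

/-- A `k`-player alternating move game modeled on a finite graph: `V` are states, `A` actions,
`owner v` is the player to move at `v`, `mov v a` the next state, `w u v` the vector of
utilities of the move from `u` to `v`, `v0` the initial state. -/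
structure AltGame (k : ℕ) where
  V : Type
  A : Type
  owner : V → Fin k
  mov : V → A → V
  w : V → V → Fin k → ℝ
  v0 : V

namespace AltGame

variable {k : ℕ} (G : AltGame k)

/-- A pure strategy profile: each player maps the history of actions to a next action. -/
abbrev PStrat := Fin k → List G.A → G.A

/-- The trajectory (current state, history of actions) induced by a pure profile. -/
def traj (σ : G.PStrat) : ℕ → G.V × List G.A
  | 0 => (G.v0, [])
  | n + 1 =>
    let x := traj σ n
    (G.mov x.1 (σ (G.owner x.1) x.2), x.2 ++ [σ (G.owner x.1) x.2])

/-- The state at round `n` under a pure profile. -/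
def state (σ : G.PStrat) (n : ℕ) : G.V := (G.traj σ n).1

/-- The (liminf of average) utility of player `i` under a pure profile. -/
noncomputable def putil (i : Fin k) (σ : G.PStrat) : ℝ :=
  liminf (fun n : ℕ =>
    (∑ t ∈ Finset.range n, G.w (G.state σ t) (G.state σ (t + 1)) i) / n) atTop

/-- A pure profile is a Nash equilibrium if no unilateral deviation improves a player. -/
def PNash (σ : G.PStrat) : Prop :=
  ∀ (i : Fin k) (τ : List G.A → G.A),
    G.putil i (Function.update σ i τ) ≤ G.putil i σ

end AltGame


set_option maxHeartbeats 1600000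
set_option linter.unusedSectionVars false

attribute [local instance] Classical.propDecidable

set_option linter.unusedSectionVars false
namespace Stmt17Aux

variable {V A : Type} [Fintype V] [Fintype A] [Nonempty A]

noncomputable def bell (mov : V → A → V) (P : V → Prop) (W : V → V → ℝ) (d : ℝ)
    (f : V → ℝ) : V → ℝ :=
  fun v => if P v then (univ : Finset A).sup' univ_nonempty (fun a => W v (mov v a) + d * f (mov v a))
           else (univ : Finset A).inf' univ_nonempty (fun a => W v (mov v a) + d * f (mov v a))

lemma abs_sup'_le {s : Finset A} (hs : s.Nonempty) (p : A → ℝ) {c : ℝ}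
    (h : ∀ a ∈ s, |p a| ≤ c) : |s.sup' hs p| ≤ c := by
  obtain ⟨a0, ha0, he⟩ := Finset.exists_mem_eq_sup' hs p
  rw [abs_le]
  constructor
  · rw [he]; exact (abs_le.mp (h a0 ha0)).1
  · exact Finset.sup'_le hs p (fun a ha => (abs_le.mp (h a ha)).2)

lemma abs_inf'_le {s : Finset A} (hs : s.Nonempty) (p : A → ℝ) {c : ℝ}
    (h : ∀ a ∈ s, |p a| ≤ c) : |s.inf' hs p| ≤ c := by
  obtain ⟨a0, ha0, he⟩ := Finset.exists_mem_eq_inf' hs p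
  rw [abs_le]
  constructor
  · exact Finset.le_inf' hs p (fun a ha => (abs_le.mp (h a ha)).1)
  · rw [he]; exact (abs_le.mp (h a0 ha0)).2

lemma abs_sup'_sub {s : Finset A} (hs : s.Nonempty) (p q : A → ℝ) {c : ℝ}
    (h : ∀ a ∈ s, |p a - q a| ≤ c) : |s.sup' hs p - s.sup' hs q| ≤ c := by
  rw [abs_sub_le_iff]
  constructor
  · rw [sub_le_iff_le_add]
    refine Finset.sup'_le hs p (fun a ha => ?_)
    have := Finset.le_sup' q ha
    linarith [(abs_le.mp (h a ha)).2]
  · rw [sub_le_iff_le_add]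
    refine Finset.sup'_le hs q (fun a ha => ?_)
    have := Finset.le_sup' p ha
    linarith [(abs_le.mp (h a ha)).1]

lemma abs_inf'_sub {s : Finset A} (hs : s.Nonempty) (p q : A → ℝ) {c : ℝ}
    (h : ∀ a ∈ s, |p a - q a| ≤ c) : |s.inf' hs p - s.inf' hs q| ≤ c := by
  rw [abs_sub_le_iff]
  constructor
  · obtain ⟨a0, ha0, he⟩ := Finset.exists_mem_eq_inf' hs q
    rw [sub_le_iff_le_add, he]
    have := Finset.inf'_le p ha0
    linarith [(abs_le.mp (h a0 ha0)).2]
  · obtain ⟨a0, ha0, he⟩ := Finset.exists_mem_eq_inf' hs p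
    rw [sub_le_iff_le_add, he]
    have := Finset.inf'_le q ha0
    linarith [(abs_le.mp (h a0 ha0)).1]

lemma bell_lipschitz (mov : V → A → V) (P : V → Prop) (W : V → V → ℝ)
    {d : ℝ} (h0 : 0 ≤ d) (f g : V → ℝ) :
    dist (bell mov P W d f) (bell mov P W d g) ≤ d * dist f g := by
  rw [dist_pi_le_iff (mul_nonneg h0 dist_nonneg)]
  intro v
  have key : ∀ a ∈ (univ : Finset A),
      |(W v (mov v a) + d * f (mov v a)) - (W v (mov v a) + d * g (mov v a))| ≤ d * dist f g := by
    intro a _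
    have : (W v (mov v a) + d * f (mov v a)) - (W v (mov v a) + d * g (mov v a))
        = d * (f (mov v a) - g (mov v a)) := by ring
    rw [this, abs_mul, abs_of_nonneg h0]
    have hd : |f (mov v a) - g (mov v a)| ≤ dist f g := by
      rw [← Real.dist_eq]; exact dist_le_pi_dist f g (mov v a)
    exact mul_le_mul_of_nonneg_left hd h0
  rw [Real.dist_eq]
  by_cases hv : P v
  · simp only [bell, if_pos hv]
    exact abs_sup'_sub univ_nonempty _ _ key
  · simp only [bell, if_neg hv]
    exact abs_inf'_sub univ_nonempty _ _ key

lemma exists_vfix (mov : V → A → V) (P : V → Prop) (W : V → V → ℝ)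
    (hW : ∀ u v, |W u v| ≤ 1) {d : ℝ} (h0 : 0 ≤ d) (h1 : d < 1) :
    ∃ f : V → ℝ, bell mov P W d f = f ∧ ∀ v, |f v| ≤ 1 / (1 - d) := by
  set K : NNReal := ⟨d, h0⟩ with hK
  have hlip : LipschitzWith K (bell mov P W d) :=
    LipschitzWith.of_dist_le_mul (fun f g => bell_lipschitz mov P W h0 f g)
  have hcon : ContractingWith K (bell mov P W d) := ⟨by exact_mod_cast h1, hlip⟩
  refine ⟨hcon.fixedPoint (bell mov P W d), hcon.fixedPoint_isFixedPt, ?_⟩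
  set f := hcon.fixedPoint (bell mov P W d) with hf
  have hfix : bell mov P W d f = f := hcon.fixedPoint_isFixedPt
  have hb0 : dist (bell mov P W d 0) 0 ≤ 1 := by
    rw [dist_pi_le_iff zero_le_one]
    intro v
    rw [Real.dist_eq, Pi.zero_apply, sub_zero]
    have key : ∀ a ∈ (univ : Finset A), |W v (mov v a) + d * (0:ℝ)| ≤ 1 := by
      intro a _
      simpa using hW v (mov v a)
    by_cases hv : P v
    · simp only [bell, if_pos hv]
      exact abs_sup'_le univ_nonempty _ (by simpa using key)
    · simp only [bell, if_neg hv]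
      exact abs_inf'_le univ_nonempty _ (by simpa using key)
  have hdd : dist f 0 ≤ d * dist f 0 + 1 := by
    calc dist f 0 ≤ dist f (bell mov P W d 0) + dist (bell mov P W d 0) 0 := dist_triangle _ _ _
    _ ≤ d * dist f 0 + 1 := by
        refine add_le_add ?_ hb0
        calc dist f (bell mov P W d 0) = dist (bell mov P W d f) (bell mov P W d 0) := by rw [hfix]
        _ ≤ d * dist f 0 := bell_lipschitz mov P W h0 f 0
  have hdist : dist f 0 ≤ 1 / (1 - d) := by
    rw [le_div_iff₀ (by linarith)]
    nlinarith [dist_nonneg (x := f) (y := (0 : V → ℝ))]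
  intro v
  calc |f v| = dist (f v) ((0 : V → ℝ) v) := by rw [Real.dist_eq, Pi.zero_apply, sub_zero]
  _ ≤ dist f 0 := dist_le_pi_dist f 0 v
  _ ≤ 1 / (1 - d) := hdist

lemma bell_facts (mov : V → A → V) (P : V → Prop) (W : V → V → ℝ)
    (hW : ∀ u v, |W u v| ≤ 1) {d : ℝ} (h0 : 0 ≤ d) (h1 : d < 1) :
    ∃ (f : V → ℝ) (sa ta : V → A),
      (∀ v, |f v| ≤ 1 / (1 - d)) ∧
      (∀ v a, P v → W v (mov v a) + d * f (mov v a) ≤ f v) ∧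
      (∀ v, P v → f v = W v (mov v (sa v)) + d * f (mov v (sa v))) ∧
      (∀ v a, ¬ P v → f v ≤ W v (mov v a) + d * f (mov v a)) ∧
      (∀ v, ¬ P v → f v = W v (mov v (ta v)) + d * f (mov v (ta v))) := by
  obtain ⟨f, hfix, hbd⟩ := exists_vfix mov P W hW h0 h1
  have hsup : ∀ v, P v → f v = (univ : Finset A).sup' univ_nonempty
      (fun a => W v (mov v a) + d * f (mov v a)) := by
    intro v hv
    conv_lhs => rw [← hfix]
    simp only [bell, if_pos hv]
  have hinf : ∀ v, ¬ P v → f v = (univ : Finset A).inf' univ_nonempty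
      (fun a => W v (mov v a) + d * f (mov v a)) := by
    intro v hv
    conv_lhs => rw [← hfix]
    simp only [bell, if_neg hv]
  refine ⟨f,
    fun v => if hv : P v then Classical.choose
      (Finset.exists_mem_eq_sup' (univ_nonempty) (fun a => W v (mov v a) + d * f (mov v a)))
      else Classical.arbitrary A,
    fun v => if hv : P v then Classical.arbitrary A
      else Classical.choose
      (Finset.exists_mem_eq_inf' (univ_nonempty) (fun a => W v (mov v a) + d * f (mov v a))),
    hbd, ?_, ?_, ?_, ?_⟩
  · intro v a hv
    rw [hsup v hv]
    exact Finset.le_sup' (fun a => W v (mov v a) + d * f (mov v a)) (mem_univ a)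
  · intro v hv
    simp only [dif_pos hv]
    have h := Classical.choose_spec
      (Finset.exists_mem_eq_sup' (univ_nonempty (α := A)) (fun a => W v (mov v a) + d * f (mov v a)))
    rw [hsup v hv]
    exact h.2
  · intro v a hv
    rw [hinf v hv]
    exact Finset.inf'_le (fun a => W v (mov v a) + d * f (mov v a)) (mem_univ a)
  · intro v hv
    simp only [dif_neg hv]
    have h := Classical.choose_spec
      (Finset.exists_mem_eq_inf' (univ_nonempty (α := A)) (fun a => W v (mov v a) + d * f (mov v a)))
    rw [hinf v hv]
    exact h.2




lemma telesc (d : ℝ) (y : ℕ → ℝ) (m : ℕ) :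
    ∑ t ∈ range m, (y t - d * y (t+1))
      = (1 - d) * ∑ t ∈ range m, y t + d * (y 0 - y m) := by
  induction m with
  | zero => simp
  | succ m ih => rw [sum_range_succ, sum_range_succ, ih]; ring

lemma abs_sum_le {w : ℕ → ℝ} (hw : ∀ t, |w t| ≤ 1) (n : ℕ) :
    |∑ t ∈ range n, w t| ≤ (n : ℝ) := by
  calc |∑ t ∈ range n, w t| ≤ ∑ t ∈ range n, |w t| := Finset.abs_sum_le_sum_abs _ _
  _ ≤ ∑ t ∈ range n, (1:ℝ) := Finset.sum_le_sum (fun t _ => hw t)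
  _ = n := by simp

lemma avg_bounded {w : ℕ → ℝ} (hw : ∀ t, |w t| ≤ 1) (n : ℕ) :
    |(∑ t ∈ range n, w t) / (n:ℝ)| ≤ 1 := by
  rcases Nat.eq_zero_or_pos n with h | h
  · simp [h]
  · have hn : (0:ℝ) < n := by exact_mod_cast h
    rw [abs_div, abs_of_pos hn, div_le_one hn]
    exact abs_sum_le hw n

lemma liminf_avg_ge {w : ℕ → ℝ} (hw : ∀ t, |w t| ≤ 1) {c C : ℝ} (T : ℕ)
    (h : ∀ n, T ≤ n → c * n - C ≤ ∑ t ∈ range n, w t) :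
    c ≤ liminf (fun n : ℕ => (∑ t ∈ range n, w t)/(n:ℝ)) atTop := by
  have hb : ∀ n : ℕ, -1 ≤ (∑ t ∈ range n, w t)/(n:ℝ) :=
    fun n => (abs_le.mp (avg_bounded hw n)).1
  have hb' : ∀ n : ℕ, (∑ t ∈ range n, w t)/(n:ℝ) ≤ 1 :=
    fun n => (abs_le.mp (avg_bounded hw n)).2
  have hlim : Tendsto (fun n : ℕ => c - C/(n:ℝ)) atTop (𝓝 c) := by
    have := tendsto_const_div_atTop_nhds_zero_nat C
    simpa using (tendsto_const_nhds (x := c) (f := atTop)).sub this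
  have hev : ∀ᶠ n : ℕ in atTop, c - C/(n:ℝ) ≤ (∑ t ∈ range n, w t)/(n:ℝ) := by
    filter_upwards [eventually_ge_atTop (max T 1)] with n hn
    have hT : T ≤ n := le_trans (le_max_left _ _) hn
    have h1 : (1:ℕ) ≤ n := le_trans (le_max_right _ _) hn
    have hn0 : (0:ℝ) < n := by exact_mod_cast h1
    have := h n hT
    have e : c - C/(n:ℝ) = (c*n - C)/n := by field_simp
    rw [e]
    exact (div_le_div_iff_of_pos_right hn0).mpr this
  have h1 : liminf (fun n : ℕ => c - C/(n:ℝ)) atTop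
      ≤ liminf (fun n : ℕ => (∑ t ∈ range n, w t)/(n:ℝ)) atTop :=
    liminf_le_liminf hev hlim.isBoundedUnder_ge
      ((isBoundedUnder_of ⟨1, fun n => hb' n⟩).isCoboundedUnder_ge)
  rw [hlim.liminf_eq] at h1
  exact h1

lemma liminf_avg_le {w : ℕ → ℝ} (hw : ∀ t, |w t| ≤ 1) {c C : ℝ} (T : ℕ)
    (h : ∀ n, T ≤ n → ∑ t ∈ range n, w t ≤ c * n + C) :
    liminf (fun n : ℕ => (∑ t ∈ range n, w t)/(n:ℝ)) atTop ≤ c := by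
  have hb : ∀ n : ℕ, -1 ≤ (∑ t ∈ range n, w t)/(n:ℝ) :=
    fun n => (abs_le.mp (avg_bounded hw n)).1
  have hlim : Tendsto (fun n : ℕ => c + C/(n:ℝ)) atTop (𝓝 c) := by
    have := tendsto_const_div_atTop_nhds_zero_nat C
    simpa using (tendsto_const_nhds (x := c) (f := atTop)).add this
  have hev : ∀ᶠ n : ℕ in atTop, (∑ t ∈ range n, w t)/(n:ℝ) ≤ c + C/(n:ℝ) := by
    filter_upwards [eventually_ge_atTop (max T 1)] with n hn
    have hT : T ≤ n := le_trans (le_max_left _ _) hn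
    have h1 : (1:ℕ) ≤ n := le_trans (le_max_right _ _) hn
    have hn0 : (0:ℝ) < n := by exact_mod_cast h1
    have := h n hT
    have e : c + C/(n:ℝ) = (c*n + C)/n := by field_simp
    rw [e]
    exact (div_le_div_iff_of_pos_right hn0).mpr this
  have h1 : liminf (fun n : ℕ => (∑ t ∈ range n, w t)/(n:ℝ)) atTop
      ≤ liminf (fun n : ℕ => c + C/(n:ℝ)) atTop :=
    liminf_le_liminf hev (isBoundedUnder_of ⟨-1, fun n => hb n⟩)
      (hlim.isBoundedUnder_le.isCoboundedUnder_ge)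
  rw [hlim.liminf_eq] at h1
  exact h1





variable {V A : Type} [Fintype V] [Fintype A] [Nonempty A]

theorem zs_main (mov : V → A → V) (P : V → Prop) (W : V → V → ℝ)
    (hW : ∀ u v, |W u v| ≤ 1) :
    ∃ (μ : V → ℝ) (sp tp : V → A),
      (∀ v a, P v → μ (mov v a) ≤ μ v) ∧
      (∀ v a, ¬ P v → μ v ≤ μ (mov v a)) ∧
      (∀ v, P v → μ v ≤ μ (mov v (sp v))) ∧
      (∀ v, ¬ P v → μ (mov v (tp v)) ≤ μ v) ∧
      (∀ (x : ℕ → V) (act : ℕ → A), (∀ t, x (t+1) = mov (x t) (act t)) →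
        (∀ t, P (x t) → act t = sp (x t)) → ∀ T : ℕ,
        μ (x T) ≤ liminf (fun n : ℕ => (∑ t ∈ range n, W (x t) (x (t+1)))/(n:ℝ)) atTop) ∧
      (∀ (x : ℕ → V) (act : ℕ → A) (T0 : ℕ), (∀ t, x (t+1) = mov (x t) (act t)) →
        (∀ t, T0 ≤ t → ¬ P (x t) → act t = tp (x t)) →
        liminf (fun n : ℕ => (∑ t ∈ range n, W (x t) (x (t+1)))/(n:ℝ)) atTop ≤ μ (x T0)) := by
  classical
  -- discount sequence
  set d : ℕ → ℝ := fun j => 1 - 1/(j+2) with hd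
  have hd0 : ∀ j, 0 ≤ d j := by
    intro j
    have h2 : (2:ℝ) ≤ (j:ℝ) + 2 := by
      have : (0:ℝ) ≤ (j:ℝ) := Nat.cast_nonneg j
      linarith
    have : 1/((j:ℝ)+2) ≤ 1 := by
      rw [div_le_one (by linarith)]; linarith
    simp only [hd]; linarith
  have hd1 : ∀ j, d j < 1 := by
    intro j
    have : 0 < 1/((j:ℝ)+2) := by positivity
    simp only [hd]; linarith
  have hdpos : ∀ j, 0 < 1 - d j := by intro j; linarith [hd1 j]
  have hdt : Tendsto d atTop (𝓝 1) := by
    have h0 : Tendsto (fun n : ℕ => (1:ℝ)/n) atTop (𝓝 0) :=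
      tendsto_const_div_atTop_nhds_zero_nat 1
    have h1 : Tendsto (fun j : ℕ => 1/((j:ℝ)+2)) atTop (𝓝 0) := by
      refine Tendsto.congr (f₁ := fun j : ℕ => (1:ℝ)/(((j+2:ℕ)):ℝ)) ?_
        (h0.comp (tendsto_add_atTop_nat 2))
      intro j; push_cast; ring
    have h2 := (tendsto_const_nhds (x := (1:ℝ)) (f := atTop (α := ℕ))).sub h1
    simp only [sub_zero] at h2
    rw [hd]; exact h2
  -- fixed points for each j
  have H : ∀ j : ℕ, ∃ (f : V → ℝ) (sa ta : V → A),
      (∀ v, |f v| ≤ 1 / (1 - d j)) ∧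
      (∀ v a, P v → W v (mov v a) + d j * f (mov v a) ≤ f v) ∧
      (∀ v, P v → f v = W v (mov v (sa v)) + d j * f (mov v (sa v))) ∧
      (∀ v a, ¬ P v → f v ≤ W v (mov v a) + d j * f (mov v a)) ∧
      (∀ v, ¬ P v → f v = W v (mov v (ta v)) + d j * f (mov v (ta v))) :=
    fun j => bell_facts mov P W hW (hd0 j) (hd1 j)
  choose F sa ta hFbd hP1 hP2 hN1 hN2 using H
  -- pigeonhole on the (finitely many) strategy pairs
  obtain ⟨pr, hpr⟩ := Finite.exists_infinite_fiber (fun j : ℕ => ((sa j, ta j) : (V → A) × (V → A)))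
  have hS : (setOf (fun j => j ∈ ((fun j : ℕ => ((sa j, ta j) : (V → A) × (V → A))) ⁻¹' {pr}))).Infinite := by
    exact Set.infinite_coe_iff.mp hpr
  set e : ℕ → ℕ := Nat.nth (fun j => j ∈ ((fun j : ℕ => ((sa j, ta j) : (V → A) × (V → A))) ⁻¹' {pr})) with he
  have he_mem : ∀ n, (sa (e n), ta (e n)) = pr := by
    intro n
    have := Nat.nth_mem_of_infinite hS n
    exact this
  have he_mono : StrictMono e := Nat.nth_strictMono hS
  -- compactness
  set q : ℕ → V → ℝ := fun m v => (1 - d (e m)) * F (e m) v with hq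
  have hq1 : ∀ m v, |q m v| ≤ 1 := by
    intro m v
    have h1 := hFbd (e m) v
    have h2 := hdpos (e m)
    rw [hq]
    simp only
    rw [abs_mul, abs_of_pos h2]
    calc (1 - d (e m)) * |F (e m) v| ≤ (1 - d (e m)) * (1/(1 - d (e m))) := by
          exact mul_le_mul_of_nonneg_left h1 (le_of_lt h2)
    _ = 1 := by field_simp
  have hK : IsCompact (Set.univ.pi (fun _ : V => Set.Icc (-1:ℝ) 1)) :=
    isCompact_univ_pi (fun _ => isCompact_Icc)
  have hqK : ∀ m, q m ∈ Set.univ.pi (fun _ : V => Set.Icc (-1:ℝ) 1) := by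
    intro m
    rw [Set.mem_univ_pi]
    exact fun v => abs_le.mp (hq1 m v)
  obtain ⟨μ, hμK, φ, hφ, hconv⟩ := hK.tendsto_subseq hqK
  have hμbd : ∀ v, |μ v| ≤ 1 := by
    intro v
    rw [Set.mem_univ_pi] at hμK
    exact abs_le.mpr (hμK v)
  -- final subsequence data
  set m : ℕ → ℕ := fun l => e (φ l) with hm
  set D : ℕ → ℝ := fun l => d (m l) with hD
  set Vf : ℕ → V → ℝ := fun l => F (m l) with hVf
  have hsa : ∀ l, sa (m l) = pr.1 := fun l => congrArg Prod.fst (he_mem (φ l))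
  have hta : ∀ l, ta (m l) = pr.2 := fun l => congrArg Prod.snd (he_mem (φ l))
  have hD0 : ∀ l, 0 ≤ D l := fun l => hd0 _
  have hD1 : ∀ l, D l < 1 := fun l => hd1 _
  have hDpos : ∀ l, 0 < 1 - D l := fun l => hdpos _
  have hDt : Tendsto D atTop (𝓝 1) := hdt.comp ((he_mono.comp hφ).tendsto_atTop)
  have h1mD : Tendsto (fun l => 1 - D l) atTop (𝓝 0) := by
    have := (tendsto_const_nhds (x := (1:ℝ)) (f := atTop (α := ℕ))).sub hDt
    simpa using this
  have hconv' : ∀ v, Tendsto (fun l => (1 - D l) * Vf l v) atTop (𝓝 (μ v)) := by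
    intro v
    have := tendsto_pi_nhds.mp hconv v
    exact this
  -- epsilon
  set ε : ℕ → ℝ := fun l => ∑ v ∈ (univ : Finset V), |(1 - D l) * Vf l v - μ v| with hε
  have hεnn : ∀ l, 0 ≤ ε l := by
    intro l
    simp only [hε]
    exact Finset.sum_nonneg (fun v _ => abs_nonneg _)
  have hεb : ∀ l v, |(1 - D l) * Vf l v - μ v| ≤ ε l := by
    intro l v
    simp only [hε]
    exact Finset.single_le_sum (f := fun v => |(1 - D l) * Vf l v - μ v|)
      (fun v _ => abs_nonneg _) (mem_univ v)
  have hεt : Tendsto ε atTop (𝓝 0) := by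
    have : ∀ v ∈ (univ : Finset V),
        Tendsto (fun l => |(1 - D l) * Vf l v - μ v|) atTop (𝓝 0) := by
      intro v _
      have := ((hconv' v).sub (tendsto_const_nhds (x := μ v))).abs
      simpa using this
    have := tendsto_finset_sum (univ : Finset V) this
    simpa using this
  -- basic bound lemmas per l
  have hVfbd : ∀ l v, |Vf l v| ≤ 1/(1 - D l) := fun l v => hFbd (m l) v
  have HP1 : ∀ l v a, P v → W v (mov v a) + D l * Vf l (mov v a) ≤ Vf l v :=
    fun l v a hv => hP1 (m l) v a hv
  have HP2 : ∀ l v, P v → Vf l v = W v (mov v (pr.1 v)) + D l * Vf l (mov v (pr.1 v)) := by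
    intro l v hv
    have h := hP2 (m l) v hv
    rw [hsa l] at h
    exact h
  have HN1 : ∀ l v a, ¬ P v → Vf l v ≤ W v (mov v a) + D l * Vf l (mov v a) :=
    fun l v a hv => hN1 (m l) v a hv
  have HN2 : ∀ l v, ¬ P v → Vf l v = W v (mov v (pr.2 v)) + D l * Vf l (mov v (pr.2 v)) := by
    intro l v hv
    have h := hN2 (m l) v hv
    rw [hta l] at h
    exact h
  -- μ inequalities
  have G1 : ∀ v a, P v → μ (mov v a) ≤ μ v := by
    intro v a hv
    refine le_of_tendsto_of_tendsto (b := atTop)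
      (f := fun l => (1 - D l) * W v (mov v a) + D l * ((1 - D l) * Vf l (mov v a)))
      (g := fun l => (1 - D l) * Vf l v) ?_ ?_ ?_
    · have t1 : Tendsto (fun l => (1 - D l) * W v (mov v a)) atTop (𝓝 0) := by
        simpa using h1mD.mul_const (W v (mov v a))
      have t2 := hDt.mul (hconv' (mov v a))
      have := t1.add t2
      simpa using this
    · exact hconv' v
    · filter_upwards with l
      have h := HP1 l v a hv
      have e : (1 - D l) * (W v (mov v a) + D l * Vf l (mov v a))
          = (1 - D l) * W v (mov v a) + D l * ((1 - D l) * Vf l (mov v a)) := by ring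
      calc (1 - D l) * W v (mov v a) + D l * ((1 - D l) * Vf l (mov v a))
          = (1 - D l) * (W v (mov v a) + D l * Vf l (mov v a)) := e.symm
      _ ≤ (1 - D l) * Vf l v := mul_le_mul_of_nonneg_left h (hDpos l).le
  have G2 : ∀ v a, ¬ P v → μ v ≤ μ (mov v a) := by
    intro v a hv
    refine le_of_tendsto_of_tendsto (b := atTop)
      (f := fun l => (1 - D l) * Vf l v)
      (g := fun l => (1 - D l) * W v (mov v a) + D l * ((1 - D l) * Vf l (mov v a))) (hconv' v) ?_ ?_
    · have t1 : Tendsto (fun l => (1 - D l) * W v (mov v a)) atTop (𝓝 0) := by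
        simpa using h1mD.mul_const (W v (mov v a))
      have t2 := hDt.mul (hconv' (mov v a))
      have := t1.add t2
      simpa using this
    · filter_upwards with l
      have h := HN1 l v a hv
      calc (1 - D l) * Vf l v
          ≤ (1 - D l) * (W v (mov v a) + D l * Vf l (mov v a)) :=
            mul_le_mul_of_nonneg_left h (hDpos l).le
      _ = (1 - D l) * W v (mov v a) + D l * ((1 - D l) * Vf l (mov v a)) := by ring
  have G3 : ∀ v, P v → μ v ≤ μ (mov v (pr.1 v)) := by
    intro v hv
    refine le_of_tendsto_of_tendsto (b := atTop)
      (f := fun l => (1 - D l) * Vf l v)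
      (g := fun l => (1 - D l) * W v (mov v (pr.1 v)) + D l * ((1 - D l) * Vf l (mov v (pr.1 v))))
      (hconv' v) ?_ ?_
    · have t1 : Tendsto (fun l => (1 - D l) * W v (mov v (pr.1 v))) atTop (𝓝 0) := by
        simpa using h1mD.mul_const (W v (mov v (pr.1 v)))
      have t2 := hDt.mul (hconv' (mov v (pr.1 v)))
      have := t1.add t2
      simpa using this
    · filter_upwards with l
      have h := HP2 l v hv
      rw [h]; exact le_of_eq (by ring)
  have G4 : ∀ v, ¬ P v → μ (mov v (pr.2 v)) ≤ μ v := by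
    intro v hv
    refine le_of_tendsto_of_tendsto (b := atTop)
      (f := fun l => (1 - D l) * W v (mov v (pr.2 v)) + D l * ((1 - D l) * Vf l (mov v (pr.2 v))))
      (g := fun l => (1 - D l) * Vf l v) ?_ (hconv' v) ?_
    · have t1 : Tendsto (fun l => (1 - D l) * W v (mov v (pr.2 v))) atTop (𝓝 0) := by
        simpa using h1mD.mul_const (W v (mov v (pr.2 v)))
      have t2 := hDt.mul (hconv' (mov v (pr.2 v)))
      have := t1.add t2
      simpa using this
    · filter_upwards with l
      have h := HN2 l v hv
      rw [h]; exact le_of_eq (by ring)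
  clear_value m D Vf ε
  refine ⟨μ, pr.1, pr.2, G1, G2, G3, G4, ?_, ?_⟩
  · -- LOW
    intro x act hstep hfol T
    obtain ⟨w', hw'⟩ : ∃ w' : ℕ → ℝ, ∀ t, W (x t) (x (t+1)) = w' t := ⟨_, fun _ => rfl⟩
    simp only [hw']
    have hwb : ∀ t, |w' t| ≤ 1 := fun t => by rw [← hw' t]; exact hW _ _
    have mono : ∀ s t : ℕ, s ≤ t → μ (x s) ≤ μ (x t) := by
      intro s t hst
      induction t with
      | zero => simp_all
      | succ t ih =>
        rcases Nat.lt_or_ge s (t+1) with h | h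
        · have hst' : s ≤ t := Nat.lt_succ_iff.mp h
          refine le_trans (ih hst') ?_
          rw [hstep t]
          by_cases hv : P (x t)
          · rw [hfol t hv]; exact G3 (x t) hv
          · exact G2 (x t) (act t) hv
        · have : s = t+1 := le_antisymm hst h
          rw [this]
    have key : ∀ l, μ (x T) - ε l ≤
        liminf (fun n : ℕ => (∑ t ∈ range n, w' t)/(n:ℝ)) atTop := by
      intro l
      obtain ⟨c, hc⟩ : ∃ c : ℝ, c = μ (x T) - ε l := ⟨_, rfl⟩
      rw [← hc]
      have hcabs : |c| ≤ 1 + ε l := by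
        have h1 := abs_le.mp (hμbd (x T))
        have h2 := hεnn l
        rw [abs_le]
        constructor <;> rw [hc] <;> linarith [h1.1, h1.2]
      refine liminf_avg_ge hwb T (C := 2/(1 - D l) + T*(1 + ε l) + T + T) ?_
      intro n hTn
      -- edge inequality
      have edge : ∀ t, Vf l (x t) - D l * Vf l (x (t+1)) ≤ w' t := by
        intro t
        by_cases hv : P (x t)
        · have h := HP2 l (x t) hv
          rw [← hfol t hv, ← hstep t] at h
          rw [← hw' t]; linarith
        · have h := HN1 l (x t) (act t) hv
          rw [← hstep t] at h
          rw [← hw' t]; linarith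
      -- telescoping on the tail
      obtain ⟨y, hy⟩ : ∃ y : ℕ → ℝ, ∀ t, y t = Vf l (x (T + t)) := ⟨_, fun _ => rfl⟩
      obtain ⟨mm, hnm⟩ : ∃ mm, n = T + mm := ⟨n - T, by omega⟩
      have htail : ∀ t, Vf l (x (T+t)) - D l * Vf l (x (T+t+1)) ≤ w' (T+t) := fun t => by
        have := edge (T+t); simpa using this
      have htel := telesc (D l) y mm
      have hsum1 : ∑ t ∈ range mm, (y t - D l * y (t+1)) ≤ ∑ t ∈ range mm, w' (T+t) := by
        refine Finset.sum_le_sum (fun t _ => ?_)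
        have h := htail t
        rw [hy t, hy (t+1)]
        have e1 : T + t + 1 = T + (t+1) := by omega
        rw [← e1]
        exact h
      have hyc : ∀ t, c ≤ (1 - D l) * y t := by
        intro t
        have h1 := hεb l (x (T+t))
        have h2 := mono T (T+t) (by omega)
        rw [abs_le] at h1
        rw [hy t, hc]
        linarith [h1.1]
      have hsumy : (mm:ℝ) * c ≤ (1 - D l) * ∑ t ∈ range mm, y t := by
        rw [Finset.mul_sum]
        calc (mm:ℝ) * c = ∑ _t ∈ range mm, c := by rw [Finset.sum_const, card_range]; ring
        _ ≤ ∑ t ∈ range mm, (1 - D l) * y t := Finset.sum_le_sum (fun t _ => hyc t)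
      have hcorr : -(2/(1 - D l)) ≤ D l * (y 0 - y mm) := by
        have b0 := abs_le.mp (hVfbd l (x (T+0)))
        have bm := abs_le.mp (hVfbd l (x (T+mm)))
        have hD0l := hD0 l
        have hD1l := hD1 l
        have hpos := hDpos l
        have hMpos : 0 < 1/(1 - D l) := by positivity
        have h1 : -(2*(1/(1-D l))) ≤ y 0 - y mm := by
          rw [hy 0, hy mm]; linarith [b0.1, bm.2]
        have h2 : D l * (-(2*(1/(1-D l)))) ≤ D l * (y 0 - y mm) :=
          mul_le_mul_of_nonneg_left h1 hD0l
        have h3 : -(2*(1/(1-D l))) ≤ D l * (-(2*(1/(1-D l)))) := by nlinarith [mul_pos hMpos hpos]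
        have h4 : -(2/(1 - D l)) = -(2*(1/(1-D l))) := by ring
        linarith
      have hpre : -(T:ℝ) ≤ ∑ t ∈ range T, w' t := by
        calc -(T:ℝ) = ∑ _t ∈ range T, (-1:ℝ) := by rw [Finset.sum_const, card_range]; ring
        _ ≤ ∑ t ∈ range T, w' t := Finset.sum_le_sum (fun t _ => (abs_le.mp (hwb t)).1)
      have hsplit : ∑ t ∈ range n, w' t
          = ∑ t ∈ range T, w' t + ∑ t ∈ range mm, w' (T+t) := by
        rw [hnm]; exact Finset.sum_range_add w' T mm
      have hmain : (mm:ℝ) * c - 2/(1 - D l) ≤ ∑ t ∈ range mm, w' (T+t) := by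
        calc (mm:ℝ) * c - 2/(1 - D l)
            ≤ (1 - D l) * ∑ t ∈ range mm, y t + D l * (y 0 - y mm) := by
              linarith [hsumy, hcorr]
        _ = ∑ t ∈ range mm, (y t - D l * y (t+1)) := htel.symm
        _ ≤ ∑ t ∈ range mm, w' (T+t) := hsum1
      have hmmn : (mm:ℝ) = (n:ℝ) - T := by
        rw [hnm]; push_cast; ring
      calc c * n - (2/(1 - D l) + T*(1 + ε l) + T + T)
          ≤ (mm:ℝ) * c - 2/(1 - D l) + (-(T:ℝ)) := by
            rw [hmmn]
            have hTc : (T:ℝ)*c ≤ T*(1+ε l) :=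
              mul_le_mul_of_nonneg_left (le_trans (le_abs_self c) hcabs) (Nat.cast_nonneg T)
            have hTnn : (0:ℝ) ≤ T := Nat.cast_nonneg T
            nlinarith [hTc, hTnn]
      _ ≤ ∑ t ∈ range mm, w' (T+t) + ∑ t ∈ range T, w' t := by
            linarith [hmain, hpre]
      _ = ∑ t ∈ range n, w' t := by rw [hsplit]; ring
    -- pass to the limit in l
    have htend : Tendsto (fun l => μ (x T) - ε l) atTop (𝓝 (μ (x T))) := by
      have := (tendsto_const_nhds (x := μ (x T)) (f := atTop (α := ℕ))).sub hεt
      simpa using this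
    exact le_of_tendsto htend (Filter.Eventually.of_forall key)
  · -- UP
    intro x act T0 hstep hfol
    obtain ⟨w', hw'⟩ : ∃ w' : ℕ → ℝ, ∀ t, W (x t) (x (t+1)) = w' t := ⟨_, fun _ => rfl⟩
    simp only [hw']
    have hwb : ∀ t, |w' t| ≤ 1 := fun t => by rw [← hw' t]; exact hW _ _
    have mono : ∀ t : ℕ, T0 ≤ t → μ (x t) ≤ μ (x T0) := by
      intro t ht
      induction t with
      | zero =>
        have : T0 = 0 := by omega
        simp [this]
      | succ t ih =>
        rcases Nat.lt_or_ge T0 (t+1) with h | h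
        · have hst' : T0 ≤ t := Nat.lt_succ_iff.mp h
          refine le_trans ?_ (ih hst')
          rw [hstep t]
          by_cases hv : P (x t)
          · exact G1 (x t) (act t) hv
          · rw [hfol t hst' hv]; exact G4 (x t) hv
        · have : T0 = t+1 := le_antisymm ht h
          rw [this]
    have key : ∀ l, liminf (fun n : ℕ => (∑ t ∈ range n, w' t)/(n:ℝ)) atTop
        ≤ μ (x T0) + ε l := by
      intro l
      obtain ⟨c, hc⟩ : ∃ c : ℝ, c = μ (x T0) + ε l := ⟨_, rfl⟩
      rw [← hc]
      have hcabs : |c| ≤ 1 + ε l := by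
        have h1 := abs_le.mp (hμbd (x T0))
        have h2 := hεnn l
        rw [abs_le]
        constructor <;> rw [hc] <;> linarith [h1.1, h1.2]
      refine liminf_avg_le hwb T0 (C := 2/(1 - D l) + T0*(1 + ε l) + T0 + T0) ?_
      intro n hTn
      have edge : ∀ t, T0 ≤ t → w' t ≤ Vf l (x t) - D l * Vf l (x (t+1)) := by
        intro t ht
        by_cases hv : P (x t)
        · have h := HP1 l (x t) (act t) hv
          rw [← hstep t] at h
          rw [← hw' t]; linarith
        · have h := HN2 l (x t) hv
          rw [← hfol t ht hv, ← hstep t] at h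
          rw [← hw' t]; linarith
      obtain ⟨y, hy⟩ : ∃ y : ℕ → ℝ, ∀ t, y t = Vf l (x (T0 + t)) := ⟨_, fun _ => rfl⟩
      obtain ⟨mm, hnm⟩ : ∃ mm, n = T0 + mm := ⟨n - T0, by omega⟩
      have htel := telesc (D l) y mm
      have hsum1 : ∑ t ∈ range mm, w' (T0+t) ≤ ∑ t ∈ range mm, (y t - D l * y (t+1)) := by
        refine Finset.sum_le_sum (fun t _ => ?_)
        have h := edge (T0+t) (by omega)
        rw [hy t, hy (t+1)]
        have e1 : T0 + t + 1 = T0 + (t+1) := by omega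
        rw [← e1]
        exact h
      have hyc : ∀ t, (1 - D l) * y t ≤ c := by
        intro t
        have h1 := hεb l (x (T0+t))
        have h2 := mono (T0+t) (by omega)
        rw [abs_le] at h1
        rw [hy t, hc]
        linarith [h1.2]
      have hsumy : (1 - D l) * ∑ t ∈ range mm, y t ≤ (mm:ℝ) * c := by
        rw [Finset.mul_sum]
        calc ∑ t ∈ range mm, (1 - D l) * y t ≤ ∑ _t ∈ range mm, c :=
              Finset.sum_le_sum (fun t _ => hyc t)
        _ = (mm:ℝ) * c := by rw [Finset.sum_const, card_range]; ring
      have hcorr : D l * (y 0 - y mm) ≤ 2/(1 - D l) := by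
        have b0 := abs_le.mp (hVfbd l (x (T0+0)))
        have bm := abs_le.mp (hVfbd l (x (T0+mm)))
        have hD0l := hD0 l
        have hD1l := hD1 l
        have hpos := hDpos l
        have hMpos : 0 < 1/(1 - D l) := by positivity
        have h1 : y 0 - y mm ≤ 2*(1/(1-D l)) := by
          rw [hy 0, hy mm]; linarith [b0.2, bm.1]
        have h2 : D l * (y 0 - y mm) ≤ D l * (2*(1/(1-D l))) :=
          mul_le_mul_of_nonneg_left h1 hD0l
        have h3 : D l * (2*(1/(1-D l))) ≤ 2*(1/(1-D l)) := by nlinarith [mul_pos hMpos hpos]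
        have h4 : 2/(1 - D l) = 2*(1/(1-D l)) := by ring
        linarith
      have hpre : ∑ t ∈ range T0, w' t ≤ (T0:ℝ) := by
        calc ∑ t ∈ range T0, w' t ≤ ∑ _t ∈ range T0, (1:ℝ) :=
              Finset.sum_le_sum (fun t _ => (abs_le.mp (hwb t)).2)
        _ = (T0:ℝ) := by rw [Finset.sum_const, card_range]; ring
      have hsplit : ∑ t ∈ range n, w' t
          = ∑ t ∈ range T0, w' t + ∑ t ∈ range mm, w' (T0+t) := by
        rw [hnm]; exact Finset.sum_range_add w' T0 mm
      have hmain : ∑ t ∈ range mm, w' (T0+t) ≤ (mm:ℝ) * c + 2/(1 - D l) := by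
        calc ∑ t ∈ range mm, w' (T0+t) ≤ ∑ t ∈ range mm, (y t - D l * y (t+1)) := hsum1
        _ = (1 - D l) * ∑ t ∈ range mm, y t + D l * (y 0 - y mm) := htel
        _ ≤ (mm:ℝ) * c + 2/(1 - D l) := by linarith [hsumy, hcorr]
      have hmmn : (mm:ℝ) = (n:ℝ) - T0 := by
        rw [hnm]; push_cast; ring
      calc ∑ t ∈ range n, w' t
          = ∑ t ∈ range T0, w' t + ∑ t ∈ range mm, w' (T0+t) := hsplit
      _ ≤ (T0:ℝ) + ((mm:ℝ) * c + 2/(1 - D l)) := by linarith [hmain, hpre]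
      _ ≤ c * n + (2/(1 - D l) + T0*(1 + ε l) + T0 + T0) := by
            rw [hmmn]
            have h1 : -(1 + ε l) ≤ c := by linarith [(abs_le.mp hcabs).1]
            have hTc : (T0:ℝ)*(-(1+ε l)) ≤ T0*c :=
              mul_le_mul_of_nonneg_left h1 (Nat.cast_nonneg T0)
            have hTnn : (0:ℝ) ≤ T0 := Nat.cast_nonneg T0
            nlinarith [hTc, hTnn]
    have htend : Tendsto (fun l => μ (x T0) + ε l) atTop (𝓝 (μ (x T0))) := by
      have := (tendsto_const_nhds (x := μ (x T0)) (f := atTop (α := ℕ))).add hεt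
      simpa using this
    exact ge_of_tendsto htend (Filter.Eventually.of_forall key)



end Stmt17Aux
namespace Stmt17Game

open Stmt17Aux

attribute [local instance] Classical.propDecidable

variable {k : ℕ} (G : AltGame k) (sp tp : Fin k → G.V → G.A)

def hstate (h : List G.A) : G.V := h.foldl G.mov G.v0

lemma hstate_concat (h : List G.A) (a : G.A) :
    hstate G (h ++ [a]) = G.mov (hstate G h) a := by
  simp [hstate, List.foldl_append]

noncomputable def pr (v : G.V) (b : Option (Fin k)) : G.A :=
  match b with
  | none => sp (G.owner v) v
  | some j => if G.owner v = j then sp j v else tp j v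

lemma pr_none (v : G.V) : pr G sp tp v none = sp (G.owner v) v := rfl

lemma pr_some_ne (v : G.V) (j : Fin k) (h : G.owner v ≠ j) :
    pr G sp tp v (some j) = tp j v := by
  simp [pr, h]

noncomputable def stp (p : G.V × Option (Fin k)) (a : G.A) : G.V × Option (Fin k) :=
  (G.mov p.1 a, if p.2.isSome then p.2
    else if a = pr G sp tp p.1 none then none else some (G.owner p.1))

noncomputable def hrec (h : List G.A) : G.V × Option (Fin k) :=
  h.foldl (stp G sp tp) (G.v0, none)

noncomputable def sstar : G.PStrat := fun j h =>
  match (hrec G sp tp h).2 with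
  | none => sp j (hrec G sp tp h).1
  | some i' => if j = i' then sp j (hrec G sp tp h).1 else tp i' (hrec G sp tp h).1

lemma hrec_nil : hrec G sp tp [] = (G.v0, none) := rfl

lemma hrec_concat (h : List G.A) (a : G.A) :
    hrec G sp tp (h ++ [a]) = stp G sp tp (hrec G sp tp h) a := by
  simp [hrec, List.foldl_append]

lemma hrec_fst (h : List G.A) : (hrec G sp tp h).1 = hstate G h := by
  induction h using List.reverseRecOn with
  | nil => rfl
  | append_singleton h a ih =>
    rw [hrec_concat, hstate_concat, ← ih]
    rfl

lemma stp_snd_some (p : G.V × Option (Fin k)) (a : G.A) (j : Fin k) (h : p.2 = some j) :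
    (stp G sp tp p a).2 = some j := by
  simp [stp, h]

lemma stp_snd_none (p : G.V × Option (Fin k)) (a : G.A) (h : p.2 = none) :
    (stp G sp tp p a).2 = if a = pr G sp tp p.1 none then none else some (G.owner p.1) := by
  simp [stp, h]

lemma sstar_owner (h : List G.A) :
    sstar G sp tp (G.owner (hstate G h)) h = pr G sp tp (hstate G h) (hrec G sp tp h).2 := by
  rcases e : (hrec G sp tp h).2 with _ | i'
  · simp [sstar, e, pr, hrec_fst]
  · by_cases hj : G.owner (hstate G h) = i'
    · simp [sstar, e, pr, hrec_fst, hj]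
    · simp [sstar, e, pr, hrec_fst, hj]

-- generic trajectory lemmas
lemma traj_zero (σ : G.PStrat) : G.traj σ 0 = (G.v0, []) := rfl

lemma traj_succ (σ : G.PStrat) (n : ℕ) :
    G.traj σ (n+1) = (G.mov (G.traj σ n).1 (σ (G.owner (G.traj σ n).1) (G.traj σ n).2),
      (G.traj σ n).2 ++ [σ (G.owner (G.traj σ n).1) (G.traj σ n).2]) := rfl

lemma hstate_traj (σ : G.PStrat) : ∀ n, hstate G (G.traj σ n).2 = (G.traj σ n).1
  | 0 => rfl
  | n+1 => by
    rw [traj_succ]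
    simp only
    rw [hstate_concat, hstate_traj σ n]

lemma traj_fst_succ (σ : G.PStrat) (n : ℕ) :
    (G.traj σ (n+1)).1 = G.mov ((G.traj σ n).1) (σ (G.owner ((G.traj σ n).1)) ((G.traj σ n).2)) := rfl

lemma traj_snd_succ (σ : G.PStrat) (n : ℕ) :
    (G.traj σ (n+1)).2 = (G.traj σ n).2 ++ [σ (G.owner ((G.traj σ n).1)) ((G.traj σ n).2)] := rfl

end Stmt17Game

/-- Folk Theorem for `k`-player alternating move games: given for every player
`i` a zero-sum value `ν i`, an optimal strategy guaranteeing player `i` utility at least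
`ν i` against any behavior of the others, and a coalition punishment profile holding
player `i` to at most `ν i`, there is a (pure) Nash equilibrium in which every player `i`
receives utility at least `ν i`. -/
theorem stmt17 {k : ℕ} (G : AltGame k) [Fintype G.V] [Fintype G.A] [Nonempty G.A]
    (hbd : ∀ u v i, G.w u v i ∈ Set.Icc (-1 : ℝ) 1)
    (ν : Fin k → ℝ)
    (hmax : ∀ i : Fin k, ∃ s : List G.A → G.A,
      ∀ σ : G.PStrat, ν i ≤ G.putil i (Function.update σ i s))
    (hmin : ∀ i : Fin k, ∃ σ : G.PStrat,
      ∀ s : List G.A → G.A, G.putil i (Function.update σ i s) ≤ ν i) :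
    ∃ σ : G.PStrat, G.PNash σ ∧ ∀ i : Fin k, ν i ≤ G.putil i σ := by
  classical
  have hW : ∀ i : Fin k, ∀ u v : G.V, |G.w u v i| ≤ 1 := by
    intro i u v
    have := hbd u v i
    rw [Set.mem_Icc] at this
    exact abs_le.mpr this
  have key : ∀ i : Fin k, ∃ (μ : G.V → ℝ) (sp tp : G.V → G.A),
      (∀ v a, G.owner v = i → μ (G.mov v a) ≤ μ v) ∧
      (∀ v a, ¬ G.owner v = i → μ v ≤ μ (G.mov v a)) ∧
      (∀ v, G.owner v = i → μ v ≤ μ (G.mov v (sp v))) ∧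
      (∀ v, ¬ G.owner v = i → μ (G.mov v (tp v)) ≤ μ v) ∧
      (∀ (x : ℕ → G.V) (act : ℕ → G.A), (∀ t, x (t+1) = G.mov (x t) (act t)) →
        (∀ t, G.owner (x t) = i → act t = sp (x t)) → ∀ T : ℕ,
        μ (x T) ≤ Filter.liminf
          (fun n : ℕ => (∑ t ∈ Finset.range n, G.w (x t) (x (t+1)) i)/(n:ℝ)) Filter.atTop) ∧
      (∀ (x : ℕ → G.V) (act : ℕ → G.A) (T0 : ℕ), (∀ t, x (t+1) = G.mov (x t) (act t)) →
        (∀ t, T0 ≤ t → ¬ G.owner (x t) = i → act t = tp (x t)) →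
        Filter.liminf
          (fun n : ℕ => (∑ t ∈ Finset.range n, G.w (x t) (x (t+1)) i)/(n:ℝ)) Filter.atTop
          ≤ μ (x T0)) := by
    intro i
    exact Stmt17Aux.zs_main G.mov (fun v => G.owner v = i) (fun u v => G.w u v i) (hW i)
  choose μf spf tpf HG1 HG2 HG3 HG4 HLOW HUP using key
  set σstar : G.PStrat := Stmt17Game.sstar G spf tpf with hσstar
  -- blame stays none along the equilibrium play
  have EQ1 : ∀ n, (Stmt17Game.hrec G spf tpf (G.traj σstar n).2).2 = none := by
    intro n
    induction n with
    | zero => rfl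
    | succ n ih =>
      have e1 : (G.traj σstar n).1 = Stmt17Game.hstate G ((G.traj σstar n).2) :=
        (Stmt17Game.hstate_traj G σstar n).symm
      have hcond : σstar (G.owner ((G.traj σstar n).1)) ((G.traj σstar n).2)
          = Stmt17Game.pr G spf tpf (Stmt17Game.hstate G ((G.traj σstar n).2)) none := by
        conv_lhs => rw [e1, hσstar]
        rw [Stmt17Game.sstar_owner, ih]
      rw [Stmt17Game.traj_snd_succ, Stmt17Game.hrec_concat,
        Stmt17Game.stp_snd_none _ _ _ _ _ ih, Stmt17Game.hrec_fst, if_pos hcond]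
  have EQ2 : ∀ n, σstar (G.owner ((G.traj σstar n).1)) ((G.traj σstar n).2)
      = spf (G.owner ((G.traj σstar n).1)) ((G.traj σstar n).1) := by
    intro n
    have e1 : (G.traj σstar n).1 = Stmt17Game.hstate G ((G.traj σstar n).2) :=
      (Stmt17Game.hstate_traj G σstar n).symm
    conv_lhs => rw [e1, hσstar]
    rw [Stmt17Game.sstar_owner, EQ1 n, Stmt17Game.pr_none, ← e1]
  -- equilibrium payoff bound at every time T
  have paylowT : ∀ (i : Fin k) (T : ℕ), μf i ((G.traj σstar T).1) ≤ G.putil i σstar := by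
    intro i T
    have happ := HLOW i (fun t => (G.traj σstar t).1)
        (fun t => σstar (G.owner ((G.traj σstar t).1)) ((G.traj σstar t).2))
        (fun t => rfl) ?_ T
    · exact happ
    · intro t hown
      have hown' : G.owner ((G.traj σstar t).1) = i := hown
      show σstar (G.owner ((G.traj σstar t).1)) ((G.traj σstar t).2)
          = spf i ((G.traj σstar t).1)
      rw [EQ2 t, hown']
  -- the guaranteed value bound
  have hν : ∀ i, ν i ≤ μf i G.v0 := by
    intro i
    obtain ⟨s, hs⟩ := hmax i
    set ρ : G.PStrat := fun _ h => tpf i (Stmt17Game.hstate G h) with hρ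
    set π0 : G.PStrat := Function.update ρ i s with hπ0
    have happ := HUP i (fun t => (G.traj π0 t).1)
        (fun t => π0 (G.owner ((G.traj π0 t).1)) ((G.traj π0 t).2)) 0
        (fun t => rfl) ?_
    · calc ν i ≤ G.putil i (Function.update ρ i s) := hs ρ
      _ ≤ μf i ((G.traj π0 0).1) := happ
      _ = μf i G.v0 := rfl
    · intro t _ hown
      have hown' : ¬ G.owner ((G.traj π0 t).1) = i := hown
      show π0 (G.owner ((G.traj π0 t).1)) ((G.traj π0 t).2) = tpf i ((G.traj π0 t).1)
      have h1 : π0 (G.owner ((G.traj π0 t).1)) = ρ (G.owner ((G.traj π0 t).1)) := by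
        rw [hπ0]; exact Function.update_of_ne hown' s ρ
      rw [h1, hρ]
      show tpf i (Stmt17Game.hstate G ((G.traj π0 t).2)) = tpf i ((G.traj π0 t).1)
      rw [Stmt17Game.hstate_traj]
  refine ⟨σstar, fun i τ => ?_, fun i => le_trans (hν i) (paylowT i 0)⟩
  -- Nash: deviation by player i with strategy τ
  set π : G.PStrat := Function.update σstar i τ with hπ
  have hπne : ∀ j, ¬ j = i → π j = σstar j := by
    intro j hj
    rw [hπ]; exact Function.update_of_ne hj τ σstar
  by_cases hall : ∀ n, (Stmt17Game.hrec G spf tpf (G.traj π n).2).2 = none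
  · -- no deviation is ever visible: trajectories coincide
    have htraj : ∀ n, G.traj π n = G.traj σstar n := by
      intro n
      induction n with
      | zero => rfl
      | succ n ih =>
        have ha : π (G.owner ((G.traj π n).1)) ((G.traj π n).2)
            = Stmt17Game.pr G spf tpf (Stmt17Game.hstate G ((G.traj π n).2)) none := by
          by_cases hown : G.owner ((G.traj π n).1) = i
          · have hb := hall (n+1)
            rw [Stmt17Game.traj_snd_succ, Stmt17Game.hrec_concat,
              Stmt17Game.stp_snd_none _ _ _ _ _ (hall n), Stmt17Game.hrec_fst] at hb
            by_cases hc : π (G.owner ((G.traj π n).1)) ((G.traj π n).2)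
                = Stmt17Game.pr G spf tpf (Stmt17Game.hstate G ((G.traj π n).2)) none
            · exact hc
            · rw [if_neg hc] at hb
              exact absurd hb (by simp)
          · rw [hπne _ hown]
            have e1 : (G.traj π n).1 = Stmt17Game.hstate G ((G.traj π n).2) :=
              (Stmt17Game.hstate_traj G π n).symm
            conv_lhs => rw [e1, hσstar]
            rw [Stmt17Game.sstar_owner, hall n]
        have haσ : σstar (G.owner ((G.traj σstar n).1)) ((G.traj σstar n).2)
            = Stmt17Game.pr G spf tpf (Stmt17Game.hstate G ((G.traj σstar n).2)) none := by
          have e1 : (G.traj σstar n).1 = Stmt17Game.hstate G ((G.traj σstar n).2) :=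
            (Stmt17Game.hstate_traj G σstar n).symm
          conv_lhs => rw [e1, hσstar]
          rw [Stmt17Game.sstar_owner, EQ1 n]
        calc G.traj π (n+1)
            = (G.mov ((G.traj π n).1) (π (G.owner ((G.traj π n).1)) ((G.traj π n).2)),
               (G.traj π n).2 ++ [π (G.owner ((G.traj π n).1)) ((G.traj π n).2)]) := rfl
          _ = (G.mov ((G.traj σstar n).1)
                (σstar (G.owner ((G.traj σstar n).1)) ((G.traj σstar n).2)),
               (G.traj σstar n).2
                 ++ [σstar (G.owner ((G.traj σstar n).1)) ((G.traj σstar n).2)]) := by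
              rw [ha, haσ, ih]
          _ = G.traj σstar (n+1) := rfl
    have hsteq : ∀ t, G.state π t = G.state σstar t := by
      intro t
      show (G.traj π t).1 = (G.traj σstar t).1
      rw [htraj t]
    have heq : G.putil i π = G.putil i σstar := by
      unfold AltGame.putil
      congr 1
      funext n
      congr 1
      refine Finset.sum_congr rfl (fun t _ => ?_)
      rw [hsteq t, hsteq (t+1)]
    exact le_of_eq heq
  · -- there is a first visible deviation, at time N, by player i
    push_neg at hall
    have hspec := Nat.find_spec hall
    have hmin' : ∀ m, m < Nat.find hall →
        (Stmt17Game.hrec G spf tpf (G.traj π m).2).2 = none := by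
      intro m hm
      have := Nat.find_min hall hm
      exact not_not.mp this
    have hfind0 : Nat.find hall ≠ 0 := by
      intro h
      rw [h] at hspec
      exact hspec rfl
    obtain ⟨N, hN⟩ : ∃ N, Nat.find hall = N + 1 := ⟨Nat.find hall - 1, by omega⟩
    have blameN : (Stmt17Game.hrec G spf tpf (G.traj π N).2).2 = none :=
      hmin' N (by omega)
    have blameN1' : ¬ (Stmt17Game.hrec G spf tpf (G.traj π (N+1)).2).2 = none := by
      rw [← hN]; exact hspec
    have hstepN : (Stmt17Game.hrec G spf tpf (G.traj π (N+1)).2).2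
        = if π (G.owner ((G.traj π N).1)) ((G.traj π N).2)
            = Stmt17Game.pr G spf tpf ((G.traj π N).1) none then none
          else some (G.owner ((G.traj π N).1)) := by
      rw [Stmt17Game.traj_snd_succ, Stmt17Game.hrec_concat,
        Stmt17Game.stp_snd_none _ _ _ _ _ blameN, Stmt17Game.hrec_fst,
        Stmt17Game.hstate_traj]
    have hdevact : ¬ π (G.owner ((G.traj π N).1)) ((G.traj π N).2)
        = Stmt17Game.pr G spf tpf ((G.traj π N).1) none := by
      intro hc
      rw [hstepN, if_pos hc] at blameN1'
      exact blameN1' rfl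
    have howni : G.owner ((G.traj π N).1) = i := by
      by_contra hown
      apply hdevact
      rw [hπne _ hown]
      have e1 : (G.traj π N).1 = Stmt17Game.hstate G ((G.traj π N).2) :=
        (Stmt17Game.hstate_traj G π N).symm
      conv_lhs => rw [e1, hσstar]
      rw [Stmt17Game.sstar_owner, blameN, ← e1]
    have blameN1 : (Stmt17Game.hrec G spf tpf (G.traj π (N+1)).2).2 = some i := by
      rw [hstepN, if_neg hdevact, howni]
    have persist : ∀ t, N+1 ≤ t →
        (Stmt17Game.hrec G spf tpf (G.traj π t).2).2 = some i := by
      intro t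
      induction t with
      | zero => intro h; omega
      | succ t ih =>
        intro ht
        rcases Nat.lt_or_ge (N+1) (t+1) with h | h
        · have ht' : N+1 ≤ t := by omega
          rw [Stmt17Game.traj_snd_succ, Stmt17Game.hrec_concat]
          exact Stmt17Game.stp_snd_some _ _ _ _ _ _ (ih ht')
        · have he : N+1 = t+1 := by omega
          rw [← he]; exact blameN1
    have prefixeq : ∀ n, n ≤ N → G.traj π n = G.traj σstar n := by
      intro n
      induction n with
      | zero => intro _; rfl
      | succ n ih =>
        intro hn
        have ihn := ih (by omega)
        have ha : π (G.owner ((G.traj π n).1)) ((G.traj π n).2)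
            = Stmt17Game.pr G spf tpf (Stmt17Game.hstate G ((G.traj π n).2)) none := by
          by_cases hown : G.owner ((G.traj π n).1) = i
          · have hb := hmin' (n+1) (by omega)
            rw [Stmt17Game.traj_snd_succ, Stmt17Game.hrec_concat,
              Stmt17Game.stp_snd_none _ _ _ _ _ (hmin' n (by omega)),
              Stmt17Game.hrec_fst] at hb
            by_cases hc : π (G.owner ((G.traj π n).1)) ((G.traj π n).2)
                = Stmt17Game.pr G spf tpf (Stmt17Game.hstate G ((G.traj π n).2)) none
            · exact hc
            · rw [if_neg hc] at hb
              exact absurd hb (by simp)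
          · rw [hπne _ hown]
            have e1 : (G.traj π n).1 = Stmt17Game.hstate G ((G.traj π n).2) :=
              (Stmt17Game.hstate_traj G π n).symm
            conv_lhs => rw [e1, hσstar]
            rw [Stmt17Game.sstar_owner, hmin' n (by omega)]
        have haσ : σstar (G.owner ((G.traj σstar n).1)) ((G.traj σstar n).2)
            = Stmt17Game.pr G spf tpf (Stmt17Game.hstate G ((G.traj σstar n).2)) none := by
          have e1 : (G.traj σstar n).1 = Stmt17Game.hstate G ((G.traj σstar n).2) :=
            (Stmt17Game.hstate_traj G σstar n).symm
          conv_lhs => rw [e1, hσstar]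
          rw [Stmt17Game.sstar_owner, EQ1 n]
        calc G.traj π (n+1)
            = (G.mov ((G.traj π n).1) (π (G.owner ((G.traj π n).1)) ((G.traj π n).2)),
               (G.traj π n).2 ++ [π (G.owner ((G.traj π n).1)) ((G.traj π n).2)]) := rfl
          _ = (G.mov ((G.traj σstar n).1)
                (σstar (G.owner ((G.traj σstar n).1)) ((G.traj σstar n).2)),
               (G.traj σstar n).2
                 ++ [σstar (G.owner ((G.traj σstar n).1)) ((G.traj σstar n).2)]) := by
              rw [ha, haσ, ihn]
          _ = G.traj σstar (n+1) := rfl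
    have tailcond : ∀ t, N+1 ≤ t → ¬ G.owner ((G.traj π t).1) = i →
        π (G.owner ((G.traj π t).1)) ((G.traj π t).2) = tpf i ((G.traj π t).1) := by
      intro t ht hown
      rw [hπne _ hown]
      have e1 : (G.traj π t).1 = Stmt17Game.hstate G ((G.traj π t).2) :=
        (Stmt17Game.hstate_traj G π t).symm
      conv_lhs => rw [e1, hσstar]
      rw [Stmt17Game.sstar_owner, persist t ht, Stmt17Game.pr_some_ne, ← e1]
      rw [← e1]
      exact hown
    have happ := HUP i (fun t => (G.traj π t).1)
        (fun t => π (G.owner ((G.traj π t).1)) ((G.traj π t).2)) (N+1)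
        (fun t => rfl) tailcond
    have hup2 : G.putil i π ≤ μf i ((G.traj π (N+1)).1) := happ
    have hdrop : μf i ((G.traj π (N+1)).1) ≤ μf i ((G.traj π N).1) := by
      have e2 : (G.traj π (N+1)).1
          = G.mov ((G.traj π N).1) (π (G.owner ((G.traj π N).1)) ((G.traj π N).2)) := rfl
      rw [e2]
      exact HG1 i ((G.traj π N).1) _ howni
    have heqN : (G.traj π N).1 = (G.traj σstar N).1 := by
      rw [prefixeq N (le_refl N)]
    calc G.putil i π ≤ μf i ((G.traj π (N+1)).1) := hup2
    _ ≤ μf i ((G.traj π N).1) := hdrop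
    _ = μf i ((G.traj σstar N).1) := by rw [heqN]
    _ ≤ G.putil i σstar := paylowT i N
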